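/- Let G be a graph on n vertices with signature σ, and suppose (G,σ) has a negative cycle (a cycle whose edge-sign product is −1) and every negative cycle has length at least ℓ. Fix a vertex v and for i ≥ 0 let V_i = {u : d(u,v) = i} (distance in the underlying graph). Then for every 0 ≤ i ≤ ⌊(ℓ−2)/2⌋, the induced signed subgraph on V_i is balanced. -/

import Mathlib

variable {V : Type*}

/-- A set `S` of vertices of a signed graph `(G, σ)` is balanced if it induces no
negative cycle (no cycle within `S` whose edge-sign product is `-1`). -/
def IsBalancedSet (G : SimpleGraph V) (σ : Sym2 V → ℤˣ) (S : Set V) : Prop :=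
  ∀ (v : V) (w : G.Walk v v), w.IsCycle → (∀ x ∈ w.support, x ∈ S) →
    (w.edges.map σ).prod = 1

/-- The signed graph `(G, σ)` admits a balanced `p`-coloring: a partition of the
vertices into (at most) `p` balanced sets. -/
def HasBalancedColoring (G : SimpleGraph V) (σ : Sym2 V → ℤˣ) (p : ℕ) : Prop :=
  ∃ f : V → Fin p, ∀ i, IsBalancedSet G σ {v | f v = i}

/-- The induced signed subgraph on a set `S` of vertices admits a balanced `p`-coloring. -/
def HasBalancedColoringOn (G : SimpleGraph V) (σ : Sym2 V → ℤˣ) (S : Set V) (p : ℕ) : Prop :=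
  ∃ f : V → Fin p, ∀ i, IsBalancedSet G σ {v | v ∈ S ∧ f v = i}

/-- The balanced chromatic number of a signed graph. -/
noncomputable def balChrNum (G : SimpleGraph V) (σ : Sym2 V → ℤˣ) : ℕ :=
  sInf {p | HasBalancedColoring G σ p}

/-- The balanced chromatic number of the induced signed subgraph on `S`. -/
noncomputable def balChrNumOn (G : SimpleGraph V) (σ : Sym2 V → ℤˣ) (S : Set V) : ℕ :=
  sInf {p | HasBalancedColoringOn G σ S p}

/-- The subgraph (set) `S` has radius at most `r` in `G`:
some vertex of `S` is within distance `r` (in `G`) of every vertex of `S`. -/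
def RadiusLE (G : SimpleGraph V) (S : Set V) (r : ℕ) : Prop :=
  ∃ x ∈ S, ∀ y ∈ S, G.Reachable x y ∧ G.dist x y ≤ r

/-- A negative closed walk contains a negative cycle of at most its length. -/
lemma exists_negCycle {G : SimpleGraph V} {σ : Sym2 V → ℤˣ} :
    ∀ (n : ℕ) (x : V) (w : G.Walk x x), w.length ≤ n → (w.edges.map σ).prod = -1 →
      ∃ (y : V) (c : G.Walk y y), c.IsCycle ∧ (c.edges.map σ).prod = -1 ∧
        c.length ≤ w.length := by
  intro n
  induction n with
  | zero =>
    intro x w hlen hneg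
    have : w.length = 0 := Nat.le_zero.mp hlen
    rw [SimpleGraph.Walk.nil_iff_eq_nil.mp (SimpleGraph.Walk.length_eq_zero_iff.mp this)] at hneg
    simp at hneg
  | succ n IH =>
    intro x w hlen hneg
    classical
    by_cases hnodup : w.support.tail.Nodup
    · -- w is a cycle
      cases w with
      | nil => simp at hneg
      | cons h p =>
        rename_i y
        have hpsup : p.support.Nodup := by simpa using hnodup
        have hpath : p.IsPath := (SimpleGraph.Walk.isPath_def p).mpr hpsup
        have hnotmem : s(x, y) ∉ p.edges := by
          intro hmem
          cases p with
          | nil => exact G.irrefl h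
          | cons h' p' =>
            rename_i z
            rw [SimpleGraph.Walk.edges_cons] at hmem
            rcases List.mem_cons.mp hmem with heq | hmem'
            · have hz : z = x := by
                have hxy : x ≠ y := G.ne_of_adj h
                rw [Sym2.eq_iff] at heq
                rcases heq with ⟨hx, hz⟩ | ⟨hx, hz⟩
                · exact absurd hx hxy
                · exact hx.symm
              subst hz
              have hp' : p'.IsPath := hpath.of_cons
              have hp'nil : p' = SimpleGraph.Walk.nil :=
                SimpleGraph.Walk.isPath_iff_eq_nil.mp hp'
              subst hp'nil
              simp only [SimpleGraph.Walk.edges_cons, SimpleGraph.Walk.edges_nil,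
                List.map_cons, List.map_nil, List.prod_cons, List.prod_nil, mul_one] at hneg
              rw [show s(y, z) = s(z, y) from Sym2.eq_swap, Int.units_mul_self] at hneg
              exact absurd hneg (by decide)
            · have hy1 : y ∈ p'.support :=
                SimpleGraph.Walk.snd_mem_support_of_mem_edges p' hmem'
              have hy2 : y ∉ p'.support := by
                have := hpath.support_nodup
                simp only [SimpleGraph.Walk.support_cons, List.nodup_cons] at this
                exact this.1
              exact hy2 hy1
        refine ⟨x, SimpleGraph.Walk.cons h p, ?_, hneg, le_rfl⟩
        rw [SimpleGraph.Walk.isCycle_def]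
        refine ⟨?_, by simp, hnodup⟩
        rw [SimpleGraph.Walk.isTrail_def, SimpleGraph.Walk.edges_cons]
        exact List.nodup_cons.mpr ⟨hnotmem, hpath.isTrail.edges_nodup⟩
    · -- find duplicate vertex, rotate, and split
      obtain ⟨u, hu⟩ := List.exists_duplicate_iff_not_nodup.mpr hnodup
      have hucount : 2 ≤ w.support.tail.count u := List.duplicate_iff_two_le_count.mp hu
      have humem : u ∈ w.support := List.mem_of_mem_tail hu.mem
      have hperm : ((w.rotate u humem).edges.map σ).Perm (w.edges.map σ) :=
        ((w.rotate_edges u humem).perm).map σ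
      have hneg' : ((w.rotate u humem).edges.map σ).prod = -1 := by
        rw [hperm.prod_eq]; exact hneg
      have hlen' : (w.rotate u humem).length = w.length := by
        rw [SimpleGraph.Walk.rotate, SimpleGraph.Walk.length_append, add_comm,
          ← SimpleGraph.Walk.length_append, SimpleGraph.Walk.take_spec]
      have hcount' : 2 ≤ (w.rotate u humem).support.tail.count u := by
        rw [((w.support_rotate u humem).perm).count_eq]; exact hucount
      cases hw'' : w.rotate u humem with
      | nil => rw [hw''] at hneg'; simp at hneg'
      | cons hadj p =>
        rename_i z
        rw [hw''] at hneg' hlen' hcount'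
        rw [SimpleGraph.Walk.length_cons] at hlen'
        have hcp : 2 ≤ p.support.count u := by
          simpa using hcount'
        have hup : u ∈ p.support := List.count_pos_iff.mp (by omega)
        have hspec : (p.takeUntil u hup).append (p.dropUntil u hup) = p := p.take_spec hup
        have hrne : p.dropUntil u hup ≠ SimpleGraph.Walk.nil := by
          intro hr
          have hpq : p = p.takeUntil u hup := by
            conv_lhs => rw [← hspec]
            rw [hr, SimpleGraph.Walk.append_nil]
          have h1 := p.count_support_takeUntil_eq_one hup
          rw [← hpq] at h1
          omega
        have hrlen : 1 ≤ (p.dropUntil u hup).length := by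
          rcases Nat.eq_zero_or_pos (p.dropUntil u hup).length with h0 | h1
          · exact absurd (SimpleGraph.Walk.nil_iff_eq_nil.mp (SimpleGraph.Walk.length_eq_zero_iff.mp h0)) hrne
          · exact h1
        have hql : (p.takeUntil u hup).length + (p.dropUntil u hup).length = p.length := by
          rw [← SimpleGraph.Walk.length_append, hspec]
        have hedges : p.edges = (p.takeUntil u hup).edges ++ (p.dropUntil u hup).edges := by
          conv_lhs => rw [← hspec]
          rw [SimpleGraph.Walk.edges_append]
        have hprodsplit :
            ((SimpleGraph.Walk.cons hadj (p.takeUntil u hup)).edges.map σ).prod *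
              ((p.dropUntil u hup).edges.map σ).prod = -1 := by
          rw [SimpleGraph.Walk.edges_cons, List.map_cons, List.prod_cons, mul_assoc,
            ← List.prod_append, ← List.map_append, ← hedges]
          rw [← List.prod_cons, ← List.map_cons, ← SimpleGraph.Walk.edges_cons]
          exact hneg'
        have hplen : p.length ≤ n := by omega
        rcases Int.units_eq_one_or
            ((SimpleGraph.Walk.cons hadj (p.takeUntil u hup)).edges.map σ).prod with h1 | h1
        · -- the drop part is negative
          rw [h1, one_mul] at hprodsplit
          obtain ⟨y, c, hc, hcneg, hclen⟩ := IH u (p.dropUntil u hup)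
            (le_trans (by omega) hplen) hprodsplit
          exact ⟨y, c, hc, hcneg, by omega⟩
        · -- the cons-take part is negative
          have hc1len : (SimpleGraph.Walk.cons hadj (p.takeUntil u hup)).length ≤ p.length := by
            rw [SimpleGraph.Walk.length_cons]; omega
          obtain ⟨y, c, hc, hcneg, hclen⟩ := IH u (SimpleGraph.Walk.cons hadj (p.takeUntil u hup))
            (le_trans hc1len hplen) h1
          exact ⟨y, c, hc, hcneg, by omega⟩

/-- If `(G, σ)` has a negative cycle and every negative cycle has length at least `ℓ`,
then for `0 ≤ i ≤ ⌊(ℓ-2)/2⌋` each distance level `V_i = {u : d(u, v) = i}` from a fixed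
vertex `v` is a balanced set. -/


theorem stmt_10 {V : Type*} [Fintype V] (G : SimpleGraph V) (σ : Sym2 V → ℤˣ) (ℓ : ℕ)
    (hex : ∃ (x : V) (w : G.Walk x x), w.IsCycle ∧ (w.edges.map σ).prod = -1)
    (hgirth : ∀ (x : V) (w : G.Walk x x), w.IsCycle → (w.edges.map σ).prod = -1 →
      ℓ ≤ w.length)
    (v : V) (i : ℕ) (hi : i ≤ (ℓ - 2) / 2) :
    IsBalancedSet G σ {u | G.Reachable u v ∧ G.dist u v = i} := by
  classical
  intro u0 c hc hsup
  simp only [Set.mem_setOf_eq] at hsup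
  rcases Nat.eq_zero_or_pos i with rfl | hipos
  · cases c with
    | nil => simp
    | cons h p =>
      rename_i y
      exfalso
      have h1 := hsup _ (SimpleGraph.Walk.start_mem_support _)
      have h2 := hsup y (by simp)
      have hu : u0 = v := h1.1.dist_eq_zero_iff.mp h1.2
      have hy : y = v := h2.1.dist_eq_zero_iff.mp h2.2
      rw [hu, hy] at h
      exact G.irrefl h
  · have h2i : 2 * i + 1 < ℓ := by omega
    set ε : V → ℤˣ := fun u => if h : G.Reachable u v then
        ((h.exists_walk_length_eq_dist.choose).edges.map σ).prod else 1 with hε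
    have hεdef : ∀ (u : V) (h : G.Reachable u v),
        ε u = ((h.exists_walk_length_eq_dist.choose).edges.map σ).prod := by
      intro u h
      rw [hε]
      simp only [dif_pos h]
    have key : ∀ x y, G.Adj x y → G.Reachable x v ∧ G.dist x v = i →
        G.Reachable y v ∧ G.dist y v = i → σ s(x, y) = ε x * ε y := by
      rintro x y hadj ⟨hxr, hxd⟩ ⟨hyr, hyd⟩
      set Px := hxr.exists_walk_length_eq_dist.choose with hPx
      set Py := hyr.exists_walk_length_eq_dist.choose with hPy
      have hPxl : Px.length = i := by
        rw [hxr.exists_walk_length_eq_dist.choose_spec, hxd]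
      have hPyl : Py.length = i := by
        rw [hyr.exists_walk_length_eq_dist.choose_spec, hyd]
      set W : G.Walk x x :=
        Px.append (Py.reverse.append (SimpleGraph.Walk.cons hadj.symm SimpleGraph.Walk.nil))
        with hW
      have hWprod : (W.edges.map σ).prod = ε x * ε y * σ s(y, x) := by
        rw [hW]
        rw [SimpleGraph.Walk.edges_append, SimpleGraph.Walk.edges_append,
          SimpleGraph.Walk.edges_reverse, SimpleGraph.Walk.edges_cons,
          SimpleGraph.Walk.edges_nil]
        rw [List.map_append, List.map_append, List.map_reverse, List.prod_append,
          List.prod_append, List.prod_reverse]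
        simp only [List.map_cons, List.map_nil, List.prod_cons, List.prod_nil, mul_one]
        rw [hεdef x hxr, hεdef y hyr, ← hPx, ← hPy, mul_assoc]
      have hWlen : W.length = 2 * i + 1 := by
        rw [hW, SimpleGraph.Walk.length_append, SimpleGraph.Walk.length_append,
          SimpleGraph.Walk.length_reverse, SimpleGraph.Walk.length_cons,
          SimpleGraph.Walk.length_nil, hPxl, hPyl]
        omega
      have hW1 : (W.edges.map σ).prod = 1 := by
        rcases Int.units_eq_one_or ((W.edges.map σ).prod) with h | h
        · exact h
        · exfalso
          obtain ⟨y0, c0, hc0, hc0n, hc0l⟩ := exists_negCycle W.length x W le_rfl h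
          have := hgirth y0 c0 hc0 hc0n
          omega
      rw [hWprod, show s(y, x) = s(x, y) from Sym2.eq_swap] at hW1
      rcases Int.units_eq_one_or (ε x) with h1 | h1 <;>
        rcases Int.units_eq_one_or (ε y) with h2 | h2 <;>
          rcases Int.units_eq_one_or (σ s(x, y)) with h3 | h3 <;>
            rw [h1, h2, h3] at hW1 ⊢ <;> simp_all
    have tele : ∀ (a b : V) (p : G.Walk a b),
        (∀ z ∈ p.support, G.Reachable z v ∧ G.dist z v = i) →
        (p.edges.map σ).prod = ε a * ε b := by
      intro a b p
      induction p with
      | nil =>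
        intro _
        simp [Int.units_mul_self]
      | cons hadj q ih =>
        rename_i a' b' c'
        intro hsub
        rw [SimpleGraph.Walk.edges_cons, List.map_cons, List.prod_cons,
          ih (fun z hz => hsub z (by simp [hz])),
          key _ _ hadj (hsub _ (by simp)) (hsub _ (by simp))]
        rw [mul_assoc, ← mul_assoc (ε b'), Int.units_mul_self, one_mul]
    rw [tele u0 u0 c hsup, Int.units_mul_self]
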